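/- For every natural number n, the number of partitions of 5n+4 is divisible by 5. -/

import Mathlib

open Finset

namespace RamanujanAux

variable {R : Type*} [CommRing R]

/-- Gaussian binomial with parameter `Y`, via the Pascal recurrence. -/
def qb (Y : R) : ℕ → ℕ → R
  | _, 0 => 1
  | 0, _+1 => 0
  | n+1, k+1 => qb Y n k + Y^(k+1) * qb Y n (k+1)

variable (Y : R)

@[simp] lemma qb_zero_right (n : ℕ) : qb Y n 0 = 1 := by cases n <;> rfl

@[simp] lemma qb_zero_succ (k : ℕ) : qb Y 0 (k+1) = 0 := rfl

lemma qb_succ (n k : ℕ) : qb Y (n+1) (k+1) = qb Y n k + Y^(k+1) * qb Y n (k+1) := rfl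

lemma qb_eq_zero {n k : ℕ} (h : n < k) : qb Y n k = 0 := by
  induction n generalizing k with
  | zero => match k, h with | k+1, _ => rfl
  | succ n ih =>
      match k, h with
      | k+1, h =>
        rw [qb_succ, ih (by omega), ih (by omega), mul_zero, add_zero]

lemma qb_diag (n : ℕ) : qb Y (n+1) (n+1) = qb Y n n := by
  rw [qb_succ, qb_eq_zero Y (Nat.lt_succ_self n), mul_zero, add_zero]

lemma qb_one_col (n : ℕ) : qb Y n 1 = ∑ i ∈ range n, Y^i := by
  induction n with
  | zero => simp
  | succ n ih =>
      have h := qb_succ Y n 0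
      simp only [Nat.zero_add, pow_one, qb_zero_right] at h
      rw [h, ih, Finset.sum_range_succ', pow_zero, Finset.mul_sum]
      simp only [pow_succ, pow_zero]
      rw [add_comm]
      congr 1
      exact Finset.sum_congr rfl fun i _ => mul_comm _ _

/-- second Pascal identity -/
lemma qb_pascal2 : ∀ k d : ℕ, qb Y (k+d+1) (k+1) = Y^d * qb Y (k+d) k + qb Y (k+d) (k+1) := by
  intro k
  induction k with
  | zero =>
      intro d
      simp only [Nat.zero_add, qb_zero_right]
      rw [qb_one_col, qb_one_col, Finset.sum_range_succ]
      ring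
  | succ k ihk =>
      intro d
      induction d with
      | zero =>
          simp only [Nat.add_zero, pow_zero, one_mul]
          rw [qb_diag, qb_eq_zero Y (show k+1 < k+1+1 by omega), add_zero]
      | succ d ihd =>
          rw [show k+1+(d+1)+1 = (k+(d+1)+1)+1 by ring, qb_succ, ihk (d+1),
            show k+(d+1)+1 = (k+1+d)+1 by ring, ihd,
            show k+1+(d+1) = (k+1+d)+1 by ring, qb_succ, qb_succ,
            show k+1+d = k+(d+1) by ring, show k+(d+1) = k+d+1 by ring]
          ring

/-- ratio identity (row form) -/
lemma qb_ratio : ∀ (n k : ℕ), (1 - Y^(k+1)) * qb Y (n+1) (k+1) = (1 - Y^(n+1)) * qb Y n k := by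
  suffices H : ∀ n : ℕ, (∀ k, (1 - Y^(k+1)) * qb Y (n+1) (k+1) = (1 - Y^(n+1)) * qb Y n k) ∧
      (∀ k d, n + 1 = k + d → (1 - Y^d) * qb Y (n+1) k = (1 - Y^(n+1)) * qb Y n k) by
    exact fun n k => (H n).1 k
  intro n
  induction n with
  | zero =>
      constructor
      · intro k
        cases k with
        | zero => simp [qb_succ]
        | succ k =>
            rw [qb_eq_zero Y (show (0:ℕ)+1 < k+1+1 by omega),
              qb_eq_zero Y (show (0:ℕ) < k+1 by omega)]
            ring
      · intro k d h
        rcases k with _ | _ | k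
        rotate_right
        · omega
        · have : d = 1 := by omega
          subst this
          simp
        · have : d = 0 := by omega
          subst this
          simp only [pow_zero, sub_self, zero_mul]
          rw [qb_eq_zero Y (show (0:ℕ) < 1 by omega), mul_zero]
  | succ n ih =>
      obtain ⟨A, B⟩ := ih
      constructor
      · intro k
        by_cases hk : k ≤ n + 1
        · rw [qb_succ]
          have hB : (1 - Y^(n+1-k)) * qb Y (n+1) k = (1 - Y^(n+1)) * qb Y n k := by
            apply B; omega
          have hA := A k
          have key : (1 - Y^(k+1)) * qb Y (n+1) (k+1) = (1 - Y^(n+1-k)) * qb Y (n+1) k := by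
            rw [hA, hB]
          have expand : Y^(k+1) * Y^(n+1-k) = Y^(n+2) := by
            rw [← pow_add]; congr 1; omega
          calc (1 - Y^(k+1)) * (qb Y (n+1) k + Y^(k+1) * qb Y (n+1) (k+1))
              = (1 - Y^(k+1)) * qb Y (n+1) k + Y^(k+1) * ((1 - Y^(k+1)) * qb Y (n+1) (k+1)) := by
                ring
            _ = (1 - Y^(k+1)) * qb Y (n+1) k + Y^(k+1) * ((1 - Y^(n+1-k)) * qb Y (n+1) k) := by
                rw [key]
            _ = (1 - Y^(n+2)) * qb Y (n+1) k := by
                rw [show Y^(k+1) * ((1 - Y^(n+1-k)) * qb Y (n+1) k)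
                    = (Y^(k+1) - Y^(k+1) * Y^(n+1-k)) * qb Y (n+1) k by ring, expand]
                ring
        · rw [qb_eq_zero Y (show n+1+1 < k+1 by omega), qb_eq_zero Y (show n+1 < k by omega)]
          ring
      · intro k d h
        cases k with
        | zero =>
            have : d = n + 2 := by omega
            subst this
            simp
        | succ k =>
            have hn : n + 1 = k + d := by omega
            have p2 : qb Y (n+2) (k+1) = Y^d * qb Y (n+1) k + qb Y (n+1) (k+1) := by
              have := qb_pascal2 Y k d
              rw [show k+d+1 = n+2 by omega, show k+d = n+1 by omega] at this
              exact this
            rw [p2]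
            have hd : Y^d * Y^(k+1) = Y^(n+2) := by rw [← pow_add]; congr 1; omega
            have hA := A k
            have hB : (1 - Y^d) * qb Y (n+1) k = (1 - Y^(n+1)) * qb Y n k := B k d hn
            calc (1 - Y^d) * (Y^d * qb Y (n+1) k + qb Y (n+1) (k+1))
                = Y^d * ((1 - Y^d) * qb Y (n+1) k) + (1 - Y^d) * qb Y (n+1) (k+1) := by ring
              _ = Y^d * ((1 - Y^(k+1)) * qb Y (n+1) (k+1)) + (1 - Y^d) * qb Y (n+1) (k+1) := by
                  rw [hA, hB]
              _ = (1 - Y^(n+2)) * qb Y (n+1) (k+1) := by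
                  rw [show Y^d * ((1 - Y^(k+1)) * qb Y (n+1) (k+1))
                      = (Y^d - Y^d * Y^(k+1)) * qb Y (n+1) (k+1) by ring, hd]
                  ring

/-- product identity: `qb (r+d) r * ∏_{i<r} (1-Y^(i+1)) = ∏_{i<r} (1-Y^(d+1+i))` -/
lemma qb_prod_eq : ∀ (r d : ℕ),
    qb Y (r+d) r * ∏ i ∈ range r, (1 - Y^(i+1)) = ∏ i ∈ range r, (1 - Y^(d+1+i)) := by
  intro r
  induction r with
  | zero => simp
  | succ r ih =>
      intro d
      rw [prod_range_succ, prod_range_succ]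
      have hr : (1 - Y^(r+1)) * qb Y (r+1+d) (r+1) = (1 - Y^(r+d+1)) * qb Y (r+d) r := by
        rw [show r+1+d = r+d+1 by ring]
        exact qb_ratio Y (r+d) r
      calc qb Y (r+1+d) (r+1) * ((∏ i ∈ range r, (1 - Y^(i+1))) * (1 - Y^(r+1)))
          = ((1 - Y^(r+1)) * qb Y (r+1+d) (r+1)) * ∏ i ∈ range r, (1 - Y^(i+1)) := by ring
        _ = (1 - Y^(r+d+1)) * (qb Y (r+d) r * ∏ i ∈ range r, (1 - Y^(i+1))) := by
            rw [hr]; ring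
        _ = (1 - Y^(r+d+1)) * ∏ i ∈ range r, (1 - Y^(d+1+i)) := by rw [ih d]
        _ = (∏ i ∈ range r, (1 - Y^(d+1+i))) * (1 - Y^(d+1+r)) := by
            rw [show r+d+1 = d+1+r by ring]; ring

/-- triangular numbers -/
def tri : ℕ → ℕ
  | 0 => 0
  | j+1 => tri j + (j+1)

lemma tri_succ (j : ℕ) : tri (j+1) = tri j + (j+1) := rfl

/-- the `Y`-exponent in the finite Jacobi triple product -/
def cc (n k : ℕ) : ℕ := if n ≤ k then tri (k - n) else tri (n - 1 - k)

lemma cc_shift (n k : ℕ) : cc (n+1) (k+1) = cc n k := by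
  unfold cc
  by_cases h : n ≤ k
  · rw [if_pos (by omega), if_pos h, show k+1-(n+1) = k-n by omega]
  · rw [if_neg (by omega), if_neg h, show n+1-1-(k+1) = n-1-k by omega]

lemma cc_zero (n : ℕ) : cc (n+1) 0 = n + cc n 0 := by
  unfold cc
  cases n with
  | zero => simp [tri]
  | succ n =>
      rw [if_neg (by omega), if_neg (by omega),
        show n+1+1-1-0 = (n+1-1-0)+1 by omega, tri_succ]
      omega

lemma ccE1 (n k : ℕ) : (k+1) + cc n k = n + cc n (k+1) := by
  unfold cc
  rcases Nat.lt_trichotomy k n with h | h | h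
  · rcases Nat.eq_or_lt_of_le (Nat.succ_le_of_lt h) with h2 | h2
    · -- k+1 = n
      rw [if_neg (by omega), if_pos (by omega),
        show n-1-k = 0 by omega, show k+1-n = 0 by omega,
        show tri 0 = 0 from rfl]
      omega
    · -- k+1 < n
      rw [if_neg (by omega), if_neg (by omega),
        show n-1-k = (n-1-(k+1))+1 by omega, tri_succ]
      omega
  · subst h
    rw [if_pos le_rfl, if_pos (by omega), Nat.sub_self,
      show k+1-k = 1 by omega, show tri 1 = 1 from rfl,
      show tri 0 = 0 from rfl]
  · rw [if_pos (by omega), if_pos (by omega),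
      show k+1-n = (k-n)+1 by omega, tri_succ]
    omega

lemma ccE2 (n k : ℕ) (hk : k ≤ 2*n) : 2*n - k + cc n (k+1) = n+1 + cc n k := by
  unfold cc
  rcases Nat.lt_trichotomy k (n-1) with h | h | h
  · -- k ≤ n-2 (so n ≥ 2... careful n=0: n-1=0, k<0 impossible)
    have hn : 2 ≤ n := by omega
    rw [if_neg (by omega), if_neg (by omega),
      show n-1-k = (n-1-(k+1))+1 by omega, tri_succ]
    omega
  · -- k = n-1
    by_cases h0 : n = 0
    · subst h0
      simp_all [cc, tri]
    · rw [if_pos (by omega), if_neg (by omega),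
        show k+1-n = 0 by omega, show n-1-k = 0 by omega]
      show 2*n-k + 0 = n+1+0
      omega
  · -- k ≥ n
    have : n ≤ k := by omega
    rw [if_pos (by omega), if_pos this,
      show k+1-n = (k-n)+1 by omega, tri_succ]
    omega

/-- double Pascal -/
lemma qb_dp (Y : R) (m j : ℕ) (hj : j ≤ m) :
    qb Y (m+2) (j+2) = (1+Y^(m+1)) * qb Y m (j+1) + Y^(j+2) * qb Y m (j+2)
      + Y^(m-j) * qb Y m j := by
  rcases Nat.eq_or_lt_of_le hj with h | h
  · subst h
    rw [qb_eq_zero Y (show j < j+1 by omega), qb_eq_zero Y (show j < j+2 by omega),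
      Nat.sub_self, pow_zero, qb_diag, qb_diag]
    ring
  · -- j + 1 ≤ m
    have p1 : qb Y (m+2) (j+2) = qb Y (m+1) (j+1) + Y^(j+2) * qb Y (m+1) (j+2) := qb_succ Y (m+1) (j+1)
    have p2a : qb Y (m+1) (j+1) = Y^(m-j) * qb Y m j + qb Y m (j+1) := by
      have := qb_pascal2 Y j (m-j)
      rw [show j+(m-j)+1 = m+1 by omega, show j+(m-j) = m by omega] at this
      exact this
    have p2b : qb Y (m+1) (j+2) = Y^(m-j-1) * qb Y m (j+1) + qb Y m (j+2) := by
      have := qb_pascal2 Y (j+1) (m-j-1)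
      rw [show j+1+(m-j-1)+1 = m+1 by omega, show j+1+(m-j-1) = m by omega] at this
      exact this
    rw [p1, p2a, p2b]
    have hY : Y^(j+2) * Y^(m-j-1) = Y^(m+1) := by
      rw [← pow_add]; congr 1; omega
    calc Y^(m-j) * qb Y m j + qb Y m (j+1) + Y^(j+2) * (Y^(m-j-1) * qb Y m (j+1) + qb Y m (j+2))
        = Y^(m-j) * qb Y m j + qb Y m (j+1) + (Y^(j+2) * Y^(m-j-1)) * qb Y m (j+1)
          + Y^(j+2) * qb Y m (j+2) := by ring
      _ = _ := by rw [hY]; ring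

/-- the key coefficient identity for the JTP induction, generic case -/
lemma dagger2 (Y : R) (n j : ℕ) :
    Y^(cc (n+1) (j+2)) * qb Y (2*n+2) (j+2)
      = Y^n * (Y^(cc n (j+2)) * qb Y (2*n) (j+2))
      + (1+Y^(2*n+1)) * (Y^(cc n (j+1)) * qb Y (2*n) (j+1))
      + Y^(n+1) * (Y^(cc n j) * qb Y (2*n) j) := by
  by_cases hj : j ≤ 2*n
  case neg =>
    rw [qb_eq_zero Y (show 2*n+2 < j+2 by omega), qb_eq_zero Y (show 2*n < j+2 by omega),
      qb_eq_zero Y (show 2*n < j+1 by omega), qb_eq_zero Y (show 2*n < j by omega)]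
    ring
  case pos =>
    have hshift : cc (n+1) (j+2) = cc n (j+1) := cc_shift n (j+1)
    rw [hshift, qb_dp Y (2*n) j hj]
    have e1 : Y^(cc n (j+1)) * Y^(j+2) = Y^n * Y^(cc n (j+2)) := by
      rw [← pow_add, ← pow_add]
      congr 1
      have := ccE1 n (j+1)
      rw [show j+1+1 = j+2 by omega] at this
      omega
    have e2 : Y^(cc n (j+1)) * Y^(2*n-j) = Y^(n+1) * Y^(cc n j) := by
      rw [← pow_add, ← pow_add]
      congr 1
      have := ccE2 n j hj
      omega
    calc Y^(cc n (j+1)) * ((1+Y^(2*n+1)) * qb Y (2*n) (j+1) + Y^(j+2) * qb Y (2*n) (j+2)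
          + Y^(2*n-j) * qb Y (2*n) j)
        = (1+Y^(2*n+1)) * (Y^(cc n (j+1)) * qb Y (2*n) (j+1))
          + (Y^(cc n (j+1)) * Y^(j+2)) * qb Y (2*n) (j+2)
          + (Y^(cc n (j+1)) * Y^(2*n-j)) * qb Y (2*n) j := by ring
      _ = _ := by rw [e1, e2]; ring

lemma dagger1 (Y : R) (n : ℕ) :
    Y^(cc (n+1) 1) * qb Y (2*n+2) 1
      = Y^n * (Y^(cc n 1) * qb Y (2*n) 1) + (1+Y^(2*n+1)) * Y^(cc n 0) := by
  rw [cc_shift n 0, qb_one_col, qb_one_col]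
  have e1 : Y^(cc n 0) * Y^1 = Y^n * Y^(cc n 1) := by
    rw [← pow_add, ← pow_add]
    congr 1
    have := ccE1 n 0
    rw [show (0:ℕ)+1 = 1 by omega] at this
    omega
  have expand : ∑ i ∈ range (2*n+2), Y^i
      = 1 + Y^(2*n+1) + Y * ∑ i ∈ range (2*n), Y^i := by
    rw [sum_range_succ, sum_range_succ', mul_sum, pow_zero]
    simp only [pow_succ]
    have hc : ∑ x ∈ range (2*n), Y^x * Y = ∑ x ∈ range (2*n), Y * Y^x :=
      Finset.sum_congr rfl (fun i _ => mul_comm _ _)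
    rw [hc]
    ring
  rw [expand]
  calc Y^(cc n 0) * (1 + Y^(2*n+1) + Y * ∑ i ∈ range (2*n), Y^i)
      = (Y^(cc n 0) * Y^1) * ∑ i ∈ range (2*n), Y^i + (1+Y^(2*n+1)) * Y^(cc n 0) := by ring
    _ = _ := by rw [e1]; ring

/-- Finite Jacobi triple product style identity. -/
theorem jtp_fin (Y z : R) : ∀ n : ℕ,
    (∏ m ∈ range n, (Y^m + z)) * ∏ j ∈ range n, (1 + z * Y^(j+1))
      = ∑ k ∈ range (2*n+1), z^k * Y^(cc n k) * qb Y (2*n) k := by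
  intro n
  induction n with
  | zero => simp [cc, tri]
  | succ n ih =>
      set f : ℕ → R := fun k => z^k * Y^(cc n k) * qb Y (2*n) k with hf
      set S : R := ∑ k ∈ range (2*n+1), f k with hS
      have f_top1 : f (2*n+1) = 0 := by
        simp only [hf, qb_eq_zero Y (show 2*n < 2*n+1 by omega), mul_zero]
      have f_top2 : f (2*n+2) = 0 := by
        simp only [hf, qb_eq_zero Y (show 2*n < 2*n+2 by omega), mul_zero]
      -- sums of shifted f
      have eqA : ∑ j ∈ range (2*n+1), f (j+2) = S - f 0 - f 1 := by
        have h1 : ∑ k ∈ range (2*n+3), f k = S + f (2*n+1) + f (2*n+2) := by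
          rw [show 2*n+3 = (2*n+2)+1 by ring, sum_range_succ,
            show 2*n+2 = (2*n+1)+1 by ring, sum_range_succ, hS]
        have h2 : ∑ k ∈ range (2*n+3), f k
            = (∑ j ∈ range (2*n+1), f (j+2)) + f 1 + f 0 := by
          rw [show 2*n+3 = (2*n+2)+1 by ring, sum_range_succ']
          rw [show 2*n+2 = (2*n+1)+1 by ring, sum_range_succ']
        rw [f_top1, f_top2, add_zero, add_zero] at h1
        rw [h1] at h2
        rw [h2]; ring
      have eqB : ∑ j ∈ range (2*n+1), f (j+1) = S - f 0 := by
        have h1 : ∑ k ∈ range (2*n+2), f k = S + f (2*n+1) := by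
          rw [show 2*n+2 = (2*n+1)+1 by ring, sum_range_succ, hS]
        have h2 : ∑ k ∈ range (2*n+2), f k = (∑ j ∈ range (2*n+1), f (j+1)) + f 0 := by
          rw [show 2*n+2 = (2*n+1)+1 by ring, sum_range_succ']
        rw [f_top1, add_zero] at h1
        rw [h1] at h2
        rw [h2]; ring
      -- RHS decomposition
      have rhs_eq : ∑ k ∈ range (2*(n+1)+1), z^k * Y^(cc (n+1) k) * qb Y (2*(n+1)) k
          = Y^n * S + z * (1+Y^(2*n+1)) * S + z^2 * Y^(n+1) * S := by
        set g : ℕ → R := fun k => z^k * Y^(cc (n+1) k) * qb Y (2*n+2) k with hg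
        have hidx : 2*(n+1)+1 = (2*n+2)+1 := by ring
        have hidx2 : 2*(n+1) = 2*n+2 := by ring
        rw [hidx]
        have peel : ∑ k ∈ range ((2*n+2)+1), z^k * Y^(cc (n+1) k) * qb Y (2*(n+1)) k
            = (∑ j ∈ range (2*n+1), g (j+2)) + g 1 + g 0 := by
          rw [hidx2, sum_range_succ', show 2*n+2 = (2*n+1)+1 by ring, sum_range_succ']
        rw [peel]
        have hg2 : ∀ j, g (j+2) = Y^n * f (j+2) + z * (1+Y^(2*n+1)) * f (j+1)
            + z^2 * Y^(n+1) * f j := by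
          intro j
          simp only [hg, hf]
          have := dagger2 Y n j
          calc z^(j+2) * Y^(cc (n+1) (j+2)) * qb Y (2*n+2) (j+2)
              = z^(j+2) * (Y^(cc (n+1) (j+2)) * qb Y (2*n+2) (j+2)) := by ring
            _ = z^(j+2) * (Y^n * (Y^(cc n (j+2)) * qb Y (2*n) (j+2))
                + (1+Y^(2*n+1)) * (Y^(cc n (j+1)) * qb Y (2*n) (j+1))
                + Y^(n+1) * (Y^(cc n j) * qb Y (2*n) j)) := by rw [this]
            _ = _ := by
                simp only [pow_succ]
                ring
        have hg1 : g 1 = Y^n * f 1 + z * (1+Y^(2*n+1)) * f 0 := by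
          simp only [hg, hf]
          have := dagger1 Y n
          calc z^1 * Y^(cc (n+1) 1) * qb Y (2*n+2) 1
              = z^1 * (Y^(cc (n+1) 1) * qb Y (2*n+2) 1) := by ring
            _ = z^1 * (Y^n * (Y^(cc n 1) * qb Y (2*n) 1) + (1+Y^(2*n+1)) * Y^(cc n 0)) := by
                rw [this]
            _ = _ := by
                simp only [pow_one, pow_zero, qb_zero_right]
                ring
        have hg0 : g 0 = Y^n * f 0 := by
          simp only [hg, hf, pow_zero, qb_zero_right, one_mul, mul_one, cc_zero n, pow_add]
        rw [sum_congr rfl (fun j _ => hg2 j), hg1, hg0]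
        rw [sum_add_distrib, sum_add_distrib, ← mul_sum, ← mul_sum, ← mul_sum]
        rw [eqA, eqB]
        ring
      rw [prod_range_succ, prod_range_succ, rhs_eq]
      calc (∏ m ∈ range n, (Y^m + z)) * (Y^n + z)
            * ((∏ j ∈ range n, (1 + z * Y^(j+1))) * (1 + z * Y^(n+1)))
          = ((Y^n + z) * (1 + z * Y^(n+1)))
            * ((∏ m ∈ range n, (Y^m + z)) * ∏ j ∈ range n, (1 + z * Y^(j+1))) := by ring
        _ = ((Y^n + z) * (1 + z * Y^(n+1))) * S := by rw [ih]
        _ = Y^n * S + z * (1+Y^(2*n+1)) * S + z^2 * Y^(n+1) * S := by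
            rw [show 2*n+1 = n+(n+1) by ring, pow_add]
            ring

lemma qb_map {R' : Type*} [CommRing R'] (φ : R →+* R') (Y : R) (n k : ℕ) :
    φ (qb Y n k) = qb (φ Y) n k := by
  induction n generalizing k with
  | zero => cases k <;> simp
  | succ n ih =>
      cases k with
      | zero => simp
      | succ k => simp [qb_succ, ih]

open Polynomial in
/-- Jacobi's identity, raw finite form, obtained by differentiating the finite JTP. -/
theorem jacobi_raw (y : R) (n : ℕ) :
    (∏ m ∈ range n, (y^(m+1) - 1)) * (∏ j ∈ range (n+1), (1 - y^(j+1)))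
      = ∑ k ∈ range (2*n+3),
          (y^(cc (n+1) k) * qb y (2*n+2) k) * (k : R) * (-1 : R)^(k-1) := by
  have H := jtp_fin (C y) (X : R[X]) (n+1)
  -- massage the left side
  have hL : (∏ m ∈ range (n+1), ((C y : R[X])^m + X)) =
      (1 + X) * ∏ m ∈ range n, ((C y : R[X])^(m+1) + X) := by
    rw [prod_range_succ']
    rw [pow_zero]
    ring
  rw [hL] at H
  -- massage the right side into `C a * X^k` form
  have hR : ∀ k ∈ range (2*(n+1)+1),
      (X : R[X])^k * (C y)^(cc (n+1) k) * qb (C y) (2*(n+1)) k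
        = C (y^(cc (n+1) k) * qb y (2*n+2) k) * X^k := by
    intro k _
    rw [show 2*(n+1) = 2*n+2 by ring, ← qb_map C, ← map_pow, map_mul]
    ring
  rw [sum_congr rfl hR] at H
  -- differentiate and evaluate at -1
  have H2 := congrArg (fun p : R[X] => eval (-1 : R) (derivative p)) H
  simp only [derivative_mul, derivative_add, derivative_one, derivative_X, zero_add,
    derivative_sum, derivative_C, derivative_X_pow, eval_add, eval_mul, eval_one, eval_X,
    eval_finset_sum, eval_pow, eval_C, one_mul, eval_prod, eval_sub, map_sum,
    zero_mul, mul_zero] at H2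
  rw [show (1 : R) + (-1) = 0 by ring] at H2
  simp only [zero_mul, add_zero, mul_zero] at H2
  have hcast : ∀ k ∈ range (2*(n+1)+1),
      (y^(cc (n+1) k) * qb y (2*n+2) k * (k:R)) * (-1 : R)^(k-1)
        = (y^(cc (n+1) k) * qb y (2*n+2) k) * (k : R) * (-1 : R)^(k-1) := by
    intro k _
    ring
  rw [show 2*(n+1)+1 = 2*n+3 by ring] at H2
  calc (∏ m ∈ range n, (y^(m+1) - 1)) * (∏ j ∈ range (n+1), (1 - y^(j+1)))
      = (∏ m ∈ range n, (y^(m+1) + (-1))) * (∏ j ∈ range (n+1), (1 + (-1) * y^(j+1))) := by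
        rw [prod_congr rfl (fun m _ => by ring : ∀ m ∈ range n, y^(m+1) - 1 = y^(m+1) + (-1)),
          prod_congr rfl (fun j _ => by ring :
            ∀ j ∈ range (n+1), 1 - y^(j+1) = 1 + (-1) * y^(j+1))]
    _ = _ := by
        rw [H2]
        exact sum_congr rfl fun k _ => by ring

section PS
open PowerSeries

variable {F : Type*} [Field F]

/-- congruence mod `X^D` in a power series ring -/
def MD (D : ℕ) (a b : PowerSeries F) : Prop := (X : PowerSeries F)^D ∣ (a - b)

lemma MD_refl (D : ℕ) (a : PowerSeries F) : MD D a a := by simp [MD]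

lemma MD_symm {D : ℕ} {a b : PowerSeries F} (h : MD D a b) : MD D b a := by
  have := dvd_neg.mpr h
  simpa [MD, neg_sub] using this

lemma MD_trans {D : ℕ} {a b c : PowerSeries F} (h1 : MD D a b) (h2 : MD D b c) : MD D a c := by
  have := dvd_add h1 h2
  simpa [MD] using this

lemma MD_add {D : ℕ} {a b c d : PowerSeries F} (h1 : MD D a b) (h2 : MD D c d) :
    MD D (a + c) (b + d) := by
  have := dvd_add h1 h2
  simpa [MD, sub_add_sub_comm] using this

lemma MD_mul {D : ℕ} {a b c d : PowerSeries F} (h1 : MD D a b) (h2 : MD D c d) :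
    MD D (a * c) (b * d) := by
  have key : a * c - b * d = (a - b) * c + b * (c - d) := by ring
  rw [MD, key]
  exact dvd_add (Dvd.dvd.mul_right h1 c) (Dvd.dvd.mul_left h2 b)

lemma MD_sum {D : ℕ} {ι : Type*} (s : Finset ι) (f g : ι → PowerSeries F)
    (h : ∀ i ∈ s, MD D (f i) (g i)) : MD D (∑ i ∈ s, f i) (∑ i ∈ s, g i) := by
  classical
  induction s using Finset.induction with
  | empty => simpa using MD_refl D 0
  | @insert x s' hx ih =>
      rw [Finset.sum_insert hx, Finset.sum_insert hx]
      exact MD_add (h x (Finset.mem_insert_self x s'))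
        (ih fun i hi => h i (Finset.mem_insert_of_mem hi))

lemma MD_prod {D : ℕ} {ι : Type*} (s : Finset ι) (f g : ι → PowerSeries F)
    (h : ∀ i ∈ s, MD D (f i) (g i)) : MD D (∏ i ∈ s, f i) (∏ i ∈ s, g i) := by
  classical
  induction s using Finset.induction with
  | empty => simpa using MD_refl D 1
  | @insert x s' hx ih =>
      rw [Finset.prod_insert hx, Finset.prod_insert hx]
      exact MD_mul (h x (Finset.mem_insert_self x s'))
        (ih fun i hi => h i (Finset.mem_insert_of_mem hi))

lemma MD_X_pow {D e : ℕ} (h : D ≤ e) : MD (F := F) D (X^e) 0 := by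
  rw [MD, sub_zero]
  exact pow_dvd_pow X h

lemma MD_one_sub_X_pow {D e : ℕ} (h : D ≤ e) : MD (F := F) D (1 - X^e) 1 := by
  rw [MD, show (1 - X^e : PowerSeries F) - 1 = -(X^e) by ring]
  exact dvd_neg.mpr (pow_dvd_pow X h)

lemma MD_coeff {D : ℕ} {a b : PowerSeries F} (h : MD D a b) {s : ℕ} (hs : s < D) :
    coeff s a = coeff s b := by
  have := (X_pow_dvd_iff.mp h) s hs
  rw [map_sub] at this
  exact sub_eq_zero.mp this

lemma MD_zero_of_X_pow_dvd {D : ℕ} {a : PowerSeries F} (h : (X : PowerSeries F)^D ∣ a) :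
    MD D a 0 := by rwa [MD, sub_zero]

lemma MD_inv {D : ℕ} {a b : PowerSeries F} (ha : constantCoeff a ≠ 0)
    (hb : constantCoeff b ≠ 0) (h : MD D a b) : MD D a⁻¹ b⁻¹ := by
  have key : a⁻¹ - b⁻¹ = a⁻¹ * b⁻¹ * (b - a) := by
    rw [mul_sub]
    rw [show a⁻¹ * b⁻¹ * b = a⁻¹ * (b * b⁻¹) by ring, PowerSeries.mul_inv_cancel b hb]
    rw [show a⁻¹ * b⁻¹ * a = b⁻¹ * (a * a⁻¹) by ring, PowerSeries.mul_inv_cancel a ha]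
    simp
  rw [MD, key]
  exact Dvd.dvd.mul_left (MD_symm h) _

/-- `∏_{i<r} (1 - X^(t(i+1)))` -/
noncomputable def PP (t r : ℕ) : PowerSeries F := ∏ i ∈ range r, (1 - X^(t*(i+1)))

lemma PP_const (t r : ℕ) (ht : 0 < t) : constantCoeff (PP t r : PowerSeries F) = 1 := by
  rw [PP, map_prod]
  rw [Finset.prod_eq_one]
  intro i _
  rw [map_sub, map_one, map_pow, constantCoeff_X, zero_pow (by positivity), sub_zero]

lemma PP_mul_inv (t r : ℕ) (ht : 0 < t) : (PP t r : PowerSeries F) * (PP t r)⁻¹ = 1 :=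
  PowerSeries.mul_inv_cancel _ (by rw [PP_const t r ht]; exact one_ne_zero)

lemma qb_cong {t r d D : ℕ} (ht : 0 < t) (hD : D ≤ t*(d+1)) :
    MD D (qb (X^t : PowerSeries F) (r+d) r) (PP t r)⁻¹ := by
  have hq := qb_prod_eq (X^t : PowerSeries F) r d
  have hpow : ∀ m : ℕ, ((X : PowerSeries F)^t)^m = X^(t*m) := by
    intro m
    rw [← pow_mul]
  have hP : (∏ i ∈ range r, (1 - ((X:PowerSeries F)^t)^(i+1))) = PP t r := by
    rw [PP]
    exact Finset.prod_congr rfl fun i _ => by rw [hpow]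
  rw [hP] at hq
  have hE : MD D (∏ i ∈ range r, (1 - ((X:PowerSeries F)^t)^(d+1+i))) 1 := by
    have := MD_prod (F := F) (range r) (fun i => 1 - ((X:PowerSeries F)^t)^(d+1+i)) (fun _ => 1)
      (fun i _ => by
        show MD D (1 - ((X:PowerSeries F)^t)^(d+1+i)) 1
        rw [hpow]
        exact MD_one_sub_X_pow (le_trans hD (Nat.mul_le_mul_left t (by omega))))
    simpa using this
  rw [← hq] at hE
  -- hE : MD D (qb .. * PP t r) 1
  have key : qb (X^t : PowerSeries F) (r+d) r - (PP t r)⁻¹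
      = (qb (X^t : PowerSeries F) (r+d) r * PP t r - 1) * (PP t r)⁻¹ := by
    rw [sub_mul, one_mul, mul_assoc, PP_mul_inv t r ht, mul_one]
  rw [MD, key]
  exact Dvd.dvd.mul_right hE _

lemma PP_cong {t r r' D : ℕ} (hr : r ≤ r') (hD : D ≤ t*(r+1)) :
    MD D (PP t r' : PowerSeries F) (PP t r) := by
  have : (PP t r' : PowerSeries F) = PP t r * ∏ i ∈ Ico r r', (1 - X^(t*(i+1))) := by
    simp only [PP, range_eq_Ico]
    exact (Finset.prod_Ico_consecutive _ (Nat.zero_le r) hr).symm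
  rw [this]
  have h2 : MD D (∏ i ∈ Ico r r', (1 - (X:PowerSeries F)^(t*(i+1)))) 1 := by
    have := MD_prod (F := F) (Ico r r') (fun i => 1 - (X:PowerSeries F)^(t*(i+1))) (fun _ => 1)
      (fun i hi => by
        show MD D (1 - (X:PowerSeries F)^(t*(i+1))) 1
        have : r + 1 ≤ i + 1 := by simp at hi; omega
        exact MD_one_sub_X_pow (le_trans hD (Nat.mul_le_mul_left t this)))
    simpa using this
  have := MD_mul (MD_refl D (PP t r : PowerSeries F)) h2
  simpa using this

lemma PP_inv_cong {t r r' D : ℕ} (ht : 0 < t) (hr : r ≤ r') (hD : D ≤ t*(r+1)) :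
    MD D ((PP t r' : PowerSeries F))⁻¹ (PP t r)⁻¹ :=
  MD_inv (by rw [PP_const _ _ ht]; exact one_ne_zero)
    (by rw [PP_const _ _ ht]; exact one_ne_zero) (PP_cong hr hD)

lemma tri_ge (u : ℕ) : u ≤ tri u := by
  induction u with
  | zero => simp [tri]
  | succ u ih => rw [tri_succ]; omega

end PS

section Jac
open PowerSeries

variable {F : Type*} [Field F]

/-- `∑_{l<D} (-1)^l (2l+1) X^{T_l}` -/
noncomputable def Jsum (D : ℕ) : PowerSeries F :=
  ∑ l ∈ range D, C ((-1)^l * ((2*l+1 : ℕ) : F)) * X^(tri l)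

lemma neg_one_pow_odd_aux (l : ℕ) : (-1 : F)^(2*l+1) = -1 := by
  rw [pow_succ, pow_mul]
  simp

lemma PP_cong_any {D : ℕ} (a b : ℕ) (ha : D ≤ a+1) (hb : D ≤ b+1) :
    MD D (PP 1 a : PowerSeries F) (PP 1 b) := by
  rcases le_total a b with h | h
  · exact MD_symm (PP_cong h (by omega))
  · exact PP_cong h (by omega)

theorem jacobi_cong (D M : ℕ) (hM : D ≤ M + 1) :
    MD D ((PP 1 M : PowerSeries F)^3) (Jsum D) := by
  set n := 2*D+2 with hn
  have raw := jacobi_raw (X : PowerSeries F) n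
  have hPfix : ∀ r : ℕ, (∏ j ∈ range r, (1 - (X:PowerSeries F)^(j+1))) = PP 1 r := by
    intro r
    rw [PP]
    exact prod_congr rfl fun j _ => by rw [one_mul]
  have hL1 : (∏ m ∈ range n, ((X:PowerSeries F)^(m+1) - 1)) = (-1)^n * PP 1 n := by
    have h1 : ∀ m ∈ range n, ((X:PowerSeries F)^(m+1) - 1)
        = (-1) * (1 - X^(m+1)) := fun m _ => by ring
    rw [prod_congr rfl h1, prod_mul_distrib, prod_const, card_range, hPfix n]
  rw [hL1, hPfix] at raw
  set Q : PowerSeries F := (PP 1 D)⁻¹ with hQ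
  set w : ℕ → PowerSeries F :=
    fun k => C ((k:F) * (-1)^(k-1)) * X^(cc (n+1) k) with hw
  -- step 3: the RHS is congruent to (∑ w k) * Q
  have step3 : MD D ((-1)^n * PP 1 n * PP 1 (n+1)) ((∑ k ∈ range (2*n+3), w k) * Q) := by
    rw [raw, sum_mul]
    apply MD_sum
    intro k hk
    rw [mem_range] at hk
    by_cases hcc : D ≤ cc (n+1) k
    · refine MD_trans (MD_zero_of_X_pow_dvd ?_) (MD_symm (MD_zero_of_X_pow_dvd ?_))
      · exact ((((pow_dvd_pow (X : PowerSeries F) hcc).mul_right _).mul_right _).mul_right _)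
      · exact ((pow_dvd_pow (X : PowerSeries F) hcc).mul_left _).mul_right _
    · push_neg at hcc
      have hkn : k ≤ n + D := by
        by_cases h : k ≤ n
        · omega
        · have hc : cc (n+1) k = tri (k - (n+1)) := by
            rw [cc, if_pos (by omega)]
          have := tri_ge (k - (n+1))
          omega
      have hkD : D ≤ k := by
        by_cases h : k ≤ n
        · have hc : cc (n+1) k = tri (n - k) := by
            rw [cc, if_neg (by omega), show n+1-1-k = n-k by omega]
          have := tri_ge (n - k)
          omega
        · omega
      have hqb : MD D (qb (X : PowerSeries F) (2*n+2) k) Q := by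
        have h1 : MD D (qb ((X:PowerSeries F)^1) (k + (2*n+2-k)) k) (PP 1 k)⁻¹ :=
          qb_cong one_pos (by omega)
        rw [pow_one, show k + (2*n+2-k) = 2*n+2 by omega] at h1
        exact MD_trans h1 (PP_inv_cong one_pos hkD (by omega))
      have hMD := MD_mul (MD_mul (MD_mul
        (MD_refl D ((X:PowerSeries F)^(cc (n+1) k))) hqb)
        (MD_refl D ((k : PowerSeries F)))) (MD_refl D ((-1:PowerSeries F)^(k-1)))
      apply MD_trans hMD
      have heq : (X:PowerSeries F)^(cc (n+1) k) * Q * (k : PowerSeries F) * (-1)^(k-1)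
          = w k * Q := by
        rw [hw]
        simp only [map_mul, map_natCast, map_pow, map_neg, map_one]
        ring
      rw [heq]
      exact MD_refl D _
  -- step 4: pairing
  have step4 : MD D (∑ k ∈ range (2*n+3), w k) ((-1)^n * Jsum D) := by
    have hsplit : ∑ k ∈ range (2*n+3), w k
        = (∑ k ∈ range (n+1), w k) + ∑ l ∈ range (n+2), w ((n+1) + l) := by
      rw [show 2*n+3 = (n+1) + (n+2) by omega, sum_range_add]
    have hrefl : ∑ k ∈ range (n+1), w k = ∑ l ∈ range (n+1), w (n - l) := by
      rw [← sum_range_reflect]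
      exact sum_congr rfl fun l _ => by rw [show n+1-1-l = n-l by omega]
    rw [hsplit, hrefl, sum_range_succ (fun l => w (n - l)) n,
      sum_range_succ (fun l => w ((n+1)+l)) (n+1),
      sum_range_succ (fun l => w ((n+1)+l)) n]
    have hw0 : w (n - n) = 0 := by
      rw [hw]
      simp
    rw [hw0, add_zero]
    -- now : (∑_{l<n} w (n-l)) + ((∑_{l<n} w(n+1+l)) + w(2n+1) + w(2n+2))
    have htop1 : MD D (w ((n+1)+n)) 0 := by
      apply MD_zero_of_X_pow_dvd
      have hc : cc (n+1) ((n+1)+n) = tri n := by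
        rw [cc, if_pos (by omega), show (n+1)+n-(n+1) = n by omega]
      rw [hw]
      have : (X:PowerSeries F)^D ∣ X^(cc (n+1) ((n+1)+n)) := by
        rw [hc]
        exact pow_dvd_pow X (le_trans (by omega) (tri_ge n))
      exact this.mul_left _
    have htop2 : MD D (w ((n+1)+(n+1))) 0 := by
      apply MD_zero_of_X_pow_dvd
      have hc : cc (n+1) ((n+1)+(n+1)) = tri (n+1) := by
        rw [cc, if_pos (by omega), show (n+1)+(n+1)-(n+1) = n+1 by omega]
      rw [hw]
      have : (X:PowerSeries F)^D ∣ X^(cc (n+1) ((n+1)+(n+1))) := by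
        rw [hc]
        exact pow_dvd_pow X (le_trans (by omega) (tri_ge (n+1)))
      exact this.mul_left _
    have hpair : ∀ l ∈ range n, w (n - l) + w ((n+1) + l)
        = (-1:PowerSeries F)^n * (C ((-1)^l * ((2*l+1 : ℕ) : F)) * X^(tri l)) := by
      intro l hl
      rw [mem_range] at hl
      have hc1 : cc (n+1) (n - l) = tri l := by
        rw [cc, if_neg (by omega), show n+1-1-(n-l) = l by omega]
      have hc2 : cc (n+1) ((n+1) + l) = tri l := by
        rw [cc, if_pos (by omega), show (n+1)+l-(n+1) = l by omega]
      rw [hw]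
      simp only [hc1, hc2]
      rw [← add_mul]
      have hsgn : ((((n-l : ℕ)):F) * (-1)^(n-l-1) + (((n+1+l : ℕ)):F) * (-1)^(n+1+l-1))
          = (-1:F)^n * ((-1)^l * ((2*l+1 : ℕ) : F)) := by
        have e2 : n+1+l-1 = n+l := by omega
        have e3 : (-1:F)^(n+l) = (-1)^(n-l-1) * (-1)^(2*l+1) := by
          rw [← pow_add, show n-l-1 + (2*l+1) = n+l by omega]
        have e4 : (((n - l : ℕ)) : F) = (n : F) - (l : F) := by
          have hln : (l:ℕ) ≤ n := by omega
          push_cast [hln]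
          ring
        have e6 : (-1:F)^n * ((-1)^l * ((2*l+1:ℕ):F)) = (-1:F)^(n+l) * ((2*l+1:ℕ):F) := by
          rw [pow_add]
          ring
        rw [e2, e6, e3, neg_one_pow_odd_aux, e4]
        push_cast
        ring
      simp only [map_mul, map_natCast, map_pow, map_neg, map_one]
      have hsgn' := congrArg (C) hsgn
      simp only [map_add, map_mul, map_natCast, map_pow, map_neg, map_one] at hsgn'
      linear_combination (X:PowerSeries F)^(tri l) * hsgn'
    have h1 : ∑ l ∈ range n, (w (n-l) + w ((n+1)+l))
        = ∑ l ∈ range n, (-1:PowerSeries F)^n * (C ((-1)^l * ((2*l+1:ℕ):F)) * X^(tri l)) :=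
      sum_congr rfl hpair
    rw [sum_add_distrib] at h1
    have hgoal_eq : (∑ l ∈ range n, w (n - l)) + ((∑ l ∈ range n, w ((n+1)+l)) + w ((n+1)+n)
          + w ((n+1)+(n+1)))
        = (-1:PowerSeries F)^n * (∑ l ∈ range n, C ((-1)^l * ((2*l+1 : ℕ) : F)) * X^(tri l))
          + (w ((n+1)+n) + w ((n+1)+(n+1))) := by
      rw [mul_sum, ← h1]
      ring
    rw [hgoal_eq]
    have hJtrunc : MD D (∑ l ∈ range n, C ((-1)^l * ((2*l+1 : ℕ) : F)) * X^(tri l))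
        (Jsum D) := by
      rw [show n = D + (D + 2) by omega, sum_range_add, Jsum]
      have hz : MD D (∑ l ∈ range (D+2),
          C ((-1)^(D+l) * ((2*(D+l)+1 : ℕ) : F)) * X^(tri (D+l))) 0 := by
        have := MD_sum (F := F) (range (D+2))
          (fun l => C ((-1)^(D+l) * ((2*(D+l)+1 : ℕ) : F)) * X^(tri (D+l))) (fun _ => 0)
          (fun l _ => by
            apply MD_zero_of_X_pow_dvd
            exact (pow_dvd_pow X (le_trans (Nat.le_add_right D l) (tri_ge (D+l)))).mul_left _)
        simpa using this
      have := MD_add (MD_refl D (∑ l ∈ range D, C ((-1)^l * ((2*l+1 : ℕ) : F)) * X^(tri l))) hz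
      simpa using this
    have hfin := MD_add (MD_mul (MD_refl D ((-1:PowerSeries F)^n)) hJtrunc)
      (MD_add htop1 htop2)
    simpa using hfin
  -- steps 5-8
  have step5 : MD D ((-1)^n * PP 1 n * PP 1 (n+1)) ((-1)^n * (Jsum D * Q)) := by
    apply MD_trans step3
    have h := MD_mul step4 (MD_refl D Q)
    apply MD_trans h
    rw [show ((-1:PowerSeries F)^n * Jsum D) * Q = (-1)^n * (Jsum D * Q) by ring]
    exact MD_refl D _
  have hsq : ((-1:PowerSeries F)^n) * ((-1)^n) = 1 := by
    rw [← pow_add]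
    exact Even.neg_one_pow ⟨n, by ring⟩
  have step6 : MD D (PP 1 n * PP 1 (n+1) : PowerSeries F) (Jsum D * Q) := by
    have h := MD_mul (MD_refl D ((-1:PowerSeries F)^n)) step5
    rw [show (-1:PowerSeries F)^n * ((-1)^n * PP 1 n * PP 1 (n+1))
        = ((-1:PowerSeries F)^n * (-1)^n) * (PP 1 n * PP 1 (n+1)) by ring,
      show (-1:PowerSeries F)^n * ((-1)^n * (Jsum D * Q))
        = ((-1:PowerSeries F)^n * (-1)^n) * (Jsum D * Q) by ring, hsq, one_mul, one_mul] at h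
    exact h
  have step7 : MD D (PP 1 D * (PP 1 n * PP 1 (n+1)) : PowerSeries F) (Jsum D) := by
    have h := MD_mul (MD_refl D (PP 1 D : PowerSeries F)) step6
    rw [show (PP 1 D : PowerSeries F) * (Jsum D * Q) = (PP 1 D * Q) * Jsum D by ring] at h
    rw [hQ, PP_mul_inv 1 D one_pos, one_mul] at h
    exact h
  have step8 : MD D ((PP 1 M : PowerSeries F)^3) (PP 1 D * (PP 1 n * PP 1 (n+1))) := by
    have h3 : ((PP 1 M : PowerSeries F))^3 = PP 1 M * (PP 1 M * PP 1 M) := by ring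
    rw [h3]
    exact MD_mul (PP_cong_any M D hM (by omega))
      (MD_mul (PP_cong_any M n hM (by omega)) (PP_cong_any M (n+1) hM (by omega)))
  exact MD_trans step8 step7

end Jac

section Pent
open PowerSeries

variable {F : Type*} [Field F]

lemma tri_two_mul (u : ℕ) : 2 * tri u = u * (u+1) := by
  induction u with
  | zero => simp [tri]
  | succ u ih => rw [tri_succ]; ring_nf; ring_nf at ih; omega

lemma prod_range_three_split {R' : Type*} [CommRing R'] (f : ℕ → R') (W : ℕ) :
    ∏ v ∈ range (3*W), f v = ∏ m ∈ range W, (f (3*m) * f (3*m+1) * f (3*m+2)) := by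
  induction W with
  | zero => simp
  | succ W ih =>
      rw [show 3*(W+1) = 3*W+1+1+1 by ring, prod_range_succ, prod_range_succ, prod_range_succ,
        ih, prod_range_succ, show 3*W+1+1 = 3*W+2 by ring]
      ring

/-- drop high-exponent factors from a product of `1 - X^(g m)` -/
lemma MD_prod_drop (g : ℕ → ℕ) {a b D : ℕ} (hab : a ≤ b) (hg : ∀ m, a ≤ m → D ≤ g m) :
    MD D (∏ m ∈ range b, (1 - X^(g m) : PowerSeries F)) (∏ m ∈ range a, (1 - X^(g m))) := by
  have hsplit : (∏ m ∈ range b, (1 - X^(g m) : PowerSeries F))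
      = (∏ m ∈ range a, (1 - X^(g m))) * ∏ m ∈ Ico a b, (1 - X^(g m)) := by
    simp only [range_eq_Ico]
    exact (Finset.prod_Ico_consecutive _ (Nat.zero_le a) hab).symm
  rw [hsplit]
  have h2 : MD D (∏ m ∈ Ico a b, (1 - (X:PowerSeries F)^(g m))) 1 := by
    have := MD_prod (F := F) (Ico a b) (fun m => 1 - (X:PowerSeries F)^(g m)) (fun _ => 1)
      (fun m hm => by
        show MD D (1 - (X:PowerSeries F)^(g m)) 1
        exact MD_one_sub_X_pow (hg m (by simp at hm; omega)))
    simpa using this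
  have := MD_mul (MD_refl D (∏ m ∈ range a, (1 - (X:PowerSeries F)^(g m)))) h2
  simpa using this

/-- pentagonal exponent -/
def eE (n' k : ℕ) : ℕ := k + 3 * cc (n'+1) k - n'

theorem pent_support (D M : ℕ) (hM : D ≤ M + 1) (s : ℕ) (hs : s < D)
    (h : coeff s (PP 1 M : PowerSeries F) ≠ 0) :
    ∃ j : ℤ, 24 * (s:ℤ) + 1 = (6*j-1)^2 := by
  set n' : ℕ := 2*D+1 with hn'
  set n : ℕ := n' + 1 with hn
  have raw := jtp_fin ((X:PowerSeries F)^3) (-X) n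
  have hkge : ∀ k, n' ≤ k + 3 * cc n k := by
    intro k
    by_cases hk : n ≤ k
    · omega
    · have hcc : cc n k = tri (n - 1 - k) := by
        rw [cc, if_neg (by omega)]
      have := tri_ge (n - 1 - k)
      omega
  have heE : ∀ k, eE n' k = k + 3 * cc n k - n' := fun k => rfl
  -- rewrite second product
  have hL2 : (∏ j ∈ range n, (1 + (-X) * ((X:PowerSeries F)^3)^(j+1)))
      = ∏ j ∈ range n, (1 - X^(3*j+4)) := by
    apply prod_congr rfl
    intro j _
    rw [← pow_mul, show 3*(j+1) = 3*j+3 by ring,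
      show (3*j+4) = (3*j+3)+1 by ring, pow_succ]
    ring
  -- rewrite first product
  have hL1 : (∏ m ∈ range n, (((X:PowerSeries F)^3)^m + (-X)))
      = (-X)^(n') * ((1 - X) * ∏ m ∈ range n', (1 - X^(3*m+2))) := by
    rw [hn, prod_range_succ']
    have hc : ∀ m ∈ range n', (((X:PowerSeries F)^3)^(m+1) + (-X))
        = (-X) * (1 - X^(3*m+2)) := by
      intro m _
      rw [← pow_mul, show 3*(m+1) = (3*m+2)+1 by ring, pow_succ]
      ring
    rw [prod_congr rfl hc, prod_mul_distrib, prod_const, card_range]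
    simp only [pow_zero]
    ring
  rw [hL1, hL2] at raw
  -- rewrite RHS terms
  have hRterm : ∀ k ∈ range (2*n+1),
      (-X)^k * ((X:PowerSeries F)^3)^(cc n k) * qb ((X:PowerSeries F)^3) (2*n) k
        = (-X)^(n') * ((-1)^(k+n') * X^(eE n' k) * qb ((X:PowerSeries F)^3) (2*n) k) := by
    intro k _
    have h1 : ((X:PowerSeries F)^3)^(cc n k) = X^(3 * cc n k) := by rw [← pow_mul]
    have h2 : (-X : PowerSeries F)^k = (-1)^k * X^k := by rw [neg_pow]
    have h3 : (-X : PowerSeries F)^(n') = (-1)^(n') * X^(n') := by rw [neg_pow]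
    have h4 : (X:PowerSeries F)^k * X^(3 * cc n k) = X^(n') * X^(eE n' k) := by
      rw [← pow_add, ← pow_add]
      congr 1
      have := hkge k
      have := heE k
      omega
    have h5 : ((-1:PowerSeries F))^(n') * (-1)^(k+n') = (-1)^k := by
      rw [← pow_add, show n' + (k + n') = k + 2*n' by ring, pow_add, pow_mul, neg_one_sq,
        one_pow, mul_one]
    calc (-X)^k * ((X:PowerSeries F)^3)^(cc n k) * qb ((X:PowerSeries F)^3) (2*n) k
        = ((-1)^k * (X^k * X^(3 * cc n k))) * qb ((X:PowerSeries F)^3) (2*n) k := by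
          rw [h1, h2]; ring
      _ = (((-1:PowerSeries F))^(n') * (-1)^(k+n')) * (X^(n') * X^(eE n' k))
            * qb ((X:PowerSeries F)^3) (2*n) k := by rw [h4, h5]
      _ = _ := by rw [h3]; ring
  rw [sum_congr rfl hRterm, ← mul_sum] at raw
  -- cancel (-X)^(n')
  have hcancel : (1 - X) * (∏ m ∈ range n', (1 - X^(3*m+2)))
        * ∏ j ∈ range n, (1 - (X:PowerSeries F)^(3*j+4))
      = ∑ k ∈ range (2*n+1),
          ((-1)^(k+n') * X^(eE n' k) * qb ((X:PowerSeries F)^3) (2*n) k) := by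
    have hne : ((-X : PowerSeries F))^(n') ≠ 0 :=
      pow_ne_zero _ (neg_ne_zero.mpr X_ne_zero)
    apply mul_left_cancel₀ hne
    calc (-X)^(n') * ((1 - X) * (∏ m ∈ range n', (1 - X^(3*m+2)))
          * ∏ j ∈ range n, (1 - (X:PowerSeries F)^(3*j+4)))
        = ((-X)^(n') * ((1 - X) * ∏ m ∈ range n', (1 - X^(3*m+2))))
          * ∏ j ∈ range n, (1 - (X:PowerSeries F)^(3*j+4)) := by ring
      _ = _ := raw
  set Q3 : PowerSeries F := (PP 3 D)⁻¹ with hQ3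
  set v : ℕ → PowerSeries F := fun k => (-1)^(k+n') * X^(eE n' k) with hv
  have step6 : MD D (∑ k ∈ range (2*n+1),
      ((-1)^(k+n') * X^(eE n' k) * qb ((X:PowerSeries F)^3) (2*n) k))
      ((∑ k ∈ range (2*n+1), v k) * Q3) := by
    rw [sum_mul]
    apply MD_sum
    intro k hk
    rw [mem_range] at hk
    by_cases hcc : D ≤ eE n' k
    · refine MD_trans (MD_zero_of_X_pow_dvd ?_) (MD_symm (MD_zero_of_X_pow_dvd ?_))
      · exact ((pow_dvd_pow (X:PowerSeries F) hcc).mul_left _).mul_right _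
      · rw [hv]
        exact ((pow_dvd_pow (X:PowerSeries F) hcc).mul_left _).mul_right _
    · push_neg at hcc
      have hkub : k ≤ n' + D := by
        have hg := hkge k
        have hrfl := heE k
        omega
      have hkD : D ≤ k := by
        by_cases hkn : n ≤ k
        · omega
        · have hcck : cc n k = tri (n - 1 - k) := by rw [cc, if_neg (by omega)]
          have h1 := tri_ge (n - 1 - k)
          have h2 := heE k
          have hg := hkge k
          omega
      have hqb : MD D (qb ((X:PowerSeries F)^3) (2*n) k) Q3 := by
        have h1 : MD D (qb ((X:PowerSeries F)^3) (k + (2*n-k)) k) (PP 3 k)⁻¹ :=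
          qb_cong (by norm_num) (by omega)
        rw [show k + (2*n-k) = 2*n by omega] at h1
        exact MD_trans h1 (PP_inv_cong (by norm_num) hkD (by omega))
      exact MD_mul (MD_refl D ((-1:PowerSeries F)^(k+n') * X^(eE n' k))) hqb
  -- assemble
  have hA : MD D ((1 - X) * (∏ m ∈ range n', (1 - X^(3*m+2)))
        * (∏ j ∈ range n, (1 - (X:PowerSeries F)^(3*j+4))) * PP 3 D)
      (((∑ k ∈ range (2*n+1), v k) * Q3) * PP 3 D) :=
    MD_mul (by rw [hcancel]; exact step6 : MD D ((1 - X) * (∏ m ∈ range n', (1 - X^(3*m+2)))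
        * ∏ j ∈ range n, (1 - (X:PowerSeries F)^(3*j+4)))
        ((∑ k ∈ range (2*n+1), v k) * Q3)) (MD_refl D (PP 3 D : PowerSeries F))
  have hQ3PP : (Q3 : PowerSeries F) * PP 3 D = 1 := by
    rw [hQ3, mul_comm]
    exact PP_mul_inv 3 D (by norm_num)
  have hcollapse : ((∑ k ∈ range (2*n+1), v k) * Q3) * PP 3 D
      = ∑ k ∈ range (2*n+1), v k := by
    rw [mul_assoc, hQ3PP, mul_one]
  rw [hcollapse] at hA
  -- left side ≡ PP 1 (3D)
  have hdrop2 : MD D (∏ m ∈ range n', (1 - (X:PowerSeries F)^(3*m+2)))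
      (∏ m ∈ range D, (1 - X^(3*m+2))) :=
    MD_prod_drop (fun m => 3*m+2) (by omega) (fun m hm => by show D ≤ 3*m+2; omega)
  have hdrop4 : MD D (∏ j ∈ range n, (1 - (X:PowerSeries F)^(3*j+4)))
      (∏ j ∈ range D, (1 - X^(3*j+4))) :=
    MD_prod_drop (fun j => 3*j+4) (by omega) (fun j hj => by show D ≤ 3*j+4; omega)
  have hone : (1 - X) * (∏ j ∈ range D, (1 - (X:PowerSeries F)^(3*j+4)))
      = ∏ m ∈ range (D+1), (1 - X^(3*m+1)) := by
    rw [prod_range_succ']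
    have hcg : ∀ j ∈ range D, (1 - (X:PowerSeries F)^(3*(j+1)+1)) = 1 - X^(3*j+4) := by
      intro j _
      rw [show 3*(j+1)+1 = 3*j+4 by ring]
    rw [prod_congr rfl hcg]
    simp only [Nat.mul_zero, Nat.zero_add, pow_one]
    ring
  have hdrop1 : MD D (∏ m ∈ range (D+1), (1 - (X:PowerSeries F)^(3*m+1)))
      (∏ m ∈ range D, (1 - X^(3*m+1))) :=
    MD_prod_drop (fun m => 3*m+1) (by omega) (fun m hm => by show D ≤ 3*m+1; omega)
  have hPP3 : (PP 3 D : PowerSeries F) = ∏ i ∈ range D, (1 - X^(3*i+3)) := by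
    rw [PP]
    exact prod_congr rfl fun i _ => by rw [show 3*(i+1) = 3*i+3 by ring]
  have hsplit3 : (PP 1 (3*D) : PowerSeries F)
      = (∏ m ∈ range D, (1 - X^(3*m+1))) * (∏ m ∈ range D, (1 - X^(3*m+2)))
        * ∏ m ∈ range D, (1 - X^(3*m+3)) := by
    rw [PP]
    have h0 : ∀ v' ∈ range (3*D), (1 - (X:PowerSeries F)^(1*(v'+1))) = 1 - X^(v'+1) := by
      intro v' _
      rw [one_mul]
    rw [prod_congr rfl h0, prod_range_three_split (fun v' => 1 - (X:PowerSeries F)^(v'+1)) D]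
    have h1 : ∀ m ∈ range D,
        ((1 - (X:PowerSeries F)^(3*m+1)) * (1 - X^(3*m+1+1)) * (1 - X^(3*m+2+1)))
        = (1 - X^(3*m+1)) * (1 - X^(3*m+2)) * (1 - X^(3*m+3)) := by
      intro m _
      rw [show 3*m+1+1 = 3*m+2 by ring, show 3*m+2+1 = 3*m+3 by ring]
    rw [prod_congr rfl h1, prod_mul_distrib, prod_mul_distrib]
  have hleft : MD D ((1 - X) * (∏ m ∈ range n', (1 - X^(3*m+2)))
        * (∏ j ∈ range n, (1 - (X:PowerSeries F)^(3*j+4))) * PP 3 D)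
      (PP 1 (3*D)) := by
    have c1 : MD D ((1 - X) * (∏ j ∈ range n, (1 - (X:PowerSeries F)^(3*j+4))))
        (∏ m ∈ range D, (1 - X^(3*m+1))) := by
      have := MD_mul (MD_refl D (1 - X : PowerSeries F)) hdrop4
      rw [hone] at this
      exact MD_trans this hdrop1
    have hbig := MD_mul (MD_mul c1 hdrop2) (MD_refl D (PP 3 D : PowerSeries F))
    rw [hPP3] at hbig
    rw [hsplit3]
    apply MD_trans _ hbig
    rw [show (1 - X) * (∏ m ∈ range n', (1 - X^(3*m+2)))
        * (∏ j ∈ range n, (1 - (X:PowerSeries F)^(3*j+4))) * PP 3 D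
      = (1 - X) * (∏ j ∈ range n, (1 - (X:PowerSeries F)^(3*j+4)))
        * (∏ m ∈ range n', (1 - X^(3*m+2))) * PP 3 D by ring]
    exact MD_refl D _
  have hfinal : MD D (PP 1 M : PowerSeries F) (∑ k ∈ range (2*n+1), v k) := by
    have h1 : MD D (PP 1 M : PowerSeries F) (PP 1 (3*D)) := PP_cong_any M (3*D) hM (by omega)
    exact MD_trans h1 (MD_trans (MD_symm hleft) hA)
  -- extract coefficient
  have hco : coeff s (PP 1 M) = coeff s (∑ k ∈ range (2*n+1), v k) :=
    MD_coeff hfinal hs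
  rw [hco, map_sum] at h
  obtain ⟨k, hkmem, hk0⟩ := Finset.exists_ne_zero_of_sum_ne_zero h
  rw [mem_range] at hkmem
  have hse : s = eE n' k := by
    by_contra hne
    apply hk0
    have hC : (v k : PowerSeries F) = C ((-1:F)^(k+n')) * X^(eE n' k) := by
      rw [hv]
      simp
    rw [hC, coeff_C_mul, coeff_X_pow, if_neg (fun hh => hne hh), mul_zero]
  -- pentagonal witness
  have htri : ∀ u : ℕ, 2 * (tri u : ℤ) = (u : ℤ) * (u + 1) := by
    intro u
    exact_mod_cast tri_two_mul u
  by_cases hkn : n ≤ k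
  · refine ⟨(k - n : ℕ) + 1, ?_⟩
    have hcck : cc n k = tri (k - n) := by rw [cc, if_pos hkn]
    have hek : ((eE n' k : ℕ) : ℤ) = ((k - n : ℕ) : ℤ) + 1 + 3 * tri (k - n) := by
      have h2 := heE k
      rw [h2, hcck] at *
      have h3 : k + 3 * tri (k-n) - n' = (k - n) + 1 + 3 * tri (k-n) := by omega
      rw [h3]
      push_cast
      ring
    rw [hse, hek]
    have h2 := htri (k - n)
    linear_combination 36 * h2
  · refine ⟨-(((n - 1 - k : ℕ) : ℤ)), ?_⟩
    have hcck : cc n k = tri (n - 1 - k) := by rw [cc, if_neg hkn]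
    have hek : ((eE n' k : ℕ) : ℤ) = 3 * (tri (n - 1 - k) : ℤ) - ((n - 1 - k : ℕ) : ℤ) := by
      have h2 := heE k
      have h3 := tri_ge (n - 1 - k)
      have h4 : eE n' k = 3 * tri (n - 1 - k) - (n - 1 - k) := by
        rw [h2, hcck]
        omega
      rw [h4]
      have h5 : n - 1 - k ≤ 3 * tri (n - 1 - k) := by omega
      push_cast [h5]
      ring
    rw [hse, hek]
    have h2 := htri (n - 1 - k)
    linear_combination 36 * h2

end Pent

section GF
open PowerSeries
open Finset.HasAntidiagonal
open scoped Classical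

variable {α : Type*}

/-- indicator power series of a set of naturals (from Archive/Wiedijk100Theorems) -/
noncomputable def indicatorSeries (α : Type*) [Semiring α] (s : Set ℕ) : PowerSeries α :=
  PowerSeries.mk fun n => if n ∈ s then 1 else 0

theorem coeff_indicator (s : Set ℕ) [Semiring α] (n : ℕ) :
    coeff (R := α) n (indicatorSeries _ s) = if n ∈ s then 1 else 0 :=
  coeff_mk _ _

theorem coeff_indicator_pos (s : Set ℕ) [Semiring α] (n : ℕ) (h : n ∈ s) :
    coeff (R := α) n (indicatorSeries _ s) = 1 := by rw [coeff_indicator, if_pos h]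

theorem coeff_indicator_neg (s : Set ℕ) [Semiring α] (n : ℕ) (h : n ∉ s) :
    coeff (R := α) n (indicatorSeries _ s) = 0 := by rw [coeff_indicator, if_neg h]

theorem constantCoeff_indicator (s : Set ℕ) [Semiring α] :
    constantCoeff (R := α) (indicatorSeries _ s) = if 0 ∈ s then 1 else 0 :=
  rfl

theorem num_series' [Field α] (i : ℕ) :
    (1 - (X : PowerSeries α) ^ (i + 1))⁻¹ = indicatorSeries α {k | i + 1 ∣ k} := by
  rw [PowerSeries.inv_eq_iff_mul_eq_one]
  · ext n
    cases n with
    | zero => simp [mul_sub, zero_pow, constantCoeff_indicator]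
    | succ n =>
      simp only [coeff_one, if_false, mul_sub, mul_one, coeff_indicator,
        LinearMap.map_sub, reduceCtorEq]
      simp_rw [coeff_mul, coeff_X_pow, coeff_indicator, @boole_mul _ _ _ _]
      erw [@sum_ite _ _ _ _ _ (fun _ => Classical.propDecidable _), sum_ite]
      simp_rw [@filter_filter _ _ _ _ _, sum_const_zero, add_zero, sum_const, nsmul_eq_mul,
        mul_one, sub_eq_iff_eq_add, zero_add]
      symm
      split_ifs with h
      · suffices #{a ∈ antidiagonal (n + 1) | i + 1 ∣ a.fst ∧ a.snd = i + 1} = 1 by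
          simp only [Set.mem_setOf_eq]; convert congr_arg ((↑) : ℕ → α) this; norm_cast
        rw [card_eq_one]
        cases' h with p hp
        refine ⟨((i + 1) * (p - 1), i + 1), ?_⟩
        ext ⟨a₁, a₂⟩
        simp only [mem_filter, Prod.mk_inj, Finset.HasAntidiagonal.mem_antidiagonal, mem_singleton]
        constructor
        · rintro ⟨a_left, ⟨a, rfl⟩, rfl⟩
          refine ⟨?_, rfl⟩
          rw [Nat.mul_sub_left_distrib, ← hp, ← a_left, mul_one, Nat.add_sub_cancel]
        · rintro ⟨rfl, rfl⟩
          match p with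
          | 0 => rw [mul_zero] at hp; cases hp
          | p + 1 => rw [hp]; simp [mul_add]
      · suffices #{a ∈ antidiagonal (n + 1) | i + 1 ∣ a.fst ∧ a.snd = i + 1} = 0 by
          simp only [Set.mem_setOf_eq]; convert congr_arg ((↑) : ℕ → α) this; norm_cast
        rw [card_eq_zero]
        apply eq_empty_of_forall_notMem
        simp only [Prod.forall, mem_filter, not_and, Finset.HasAntidiagonal.mem_antidiagonal]
        rintro _ h₁ h₂ ⟨a, rfl⟩ rfl
        apply h
        simp [← h₂]
  · simp [zero_pow]

-- The main workhorse (from Archive/Wiedijk100Theorems/Partition.lean)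
theorem partialGF_prop (α : Type*) [CommSemiring α] (n : ℕ) (s : Finset ℕ)
    (hs : ∀ i ∈ s, 0 < i) (c : ℕ → Set ℕ) (hc : ∀ i, i ∉ s → 0 ∈ c i) :
    #{p : n.Partition | (∀ j, p.parts.count j ∈ c j) ∧ ∀ j ∈ p.parts, j ∈ s} =
      coeff n (∏ i ∈ s, indicatorSeries α ((· * i) '' c i)) := by
  simp_rw [coeff_prod, coeff_indicator, prod_boole, sum_boole]
  apply congr_arg
  simp only [mem_univ, forall_true_left, not_and, not_forall, exists_prop,
    Set.mem_image, not_exists]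
  set φ : (a : Nat.Partition n) →
    a ∈ filter (fun p ↦ (∀ (j : ℕ), Multiset.count j p.parts ∈ c j) ∧ ∀ j ∈ p.parts, j ∈ s) univ →
    ℕ →₀ ℕ := fun p _ => {
      toFun := fun i => Multiset.count i p.parts • i
      support := Finset.filter (fun i => i ≠ 0) p.parts.toFinset
      mem_support_toFun := fun a => by
        simp only [smul_eq_mul, ne_eq, mul_eq_zero, Multiset.count_eq_zero]
        rw [not_or, not_not]
        simp only [Multiset.mem_toFinset, not_not, mem_filter] }
  refine Finset.card_bij φ ?_ ?_ ?_
  · intro a ha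
    simp only [φ, not_forall, not_exists, not_and, exists_prop, mem_filter]
    rw [mem_finsuppAntidiag]
    dsimp only [ne_eq, smul_eq_mul, id_eq, eq_mpr_eq_cast, le_eq_subset, Finsupp.coe_mk]
    simp only [mem_univ, forall_true_left, not_and, not_forall, exists_prop,
      mem_filter, true_and] at ha
    refine ⟨⟨?_, fun i ↦ ?_⟩, fun i _ ↦ ⟨a.parts.count i, ha.1 i, rfl⟩⟩
    · conv_rhs => simp [← a.parts_sum]
      rw [sum_multiset_count_of_subset _ s]
      · simp only [smul_eq_mul]
      · intro i
        simp only [Multiset.mem_toFinset, not_not, mem_filter]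
        apply ha.2
    · simp only [ne_eq, Multiset.mem_toFinset, not_not, mem_filter, and_imp]
      exact fun hi _ ↦ ha.2 i hi
  · intro p₁ hp₁ p₂ hp₂ h
    apply Nat.Partition.ext
    simp only [true_and, mem_univ, mem_filter] at hp₁ hp₂
    ext i
    simp only [φ, ne_eq, Multiset.mem_toFinset, not_not, smul_eq_mul, Finsupp.mk.injEq] at h
    by_cases hi : i = 0
    · rw [hi]
      rw [Multiset.count_eq_zero_of_notMem]
      · rw [Multiset.count_eq_zero_of_notMem]
        intro a; exact Nat.lt_irrefl 0 (hs 0 (hp₂.2 0 a))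
      intro a; exact Nat.lt_irrefl 0 (hs 0 (hp₁.2 0 a))
    · rw [← mul_left_inj' hi]
      rw [funext_iff] at h
      exact h.2 i
  · simp only [φ, mem_filter, mem_finsuppAntidiag, mem_univ, exists_prop, true_and, and_assoc]
    rintro f ⟨hf, hf₃, hf₄⟩
    have hf' : f ∈ finsuppAntidiag s n := mem_finsuppAntidiag.mpr ⟨hf, hf₃⟩
    simp only [mem_finsuppAntidiag] at hf'
    refine ⟨⟨∑ i ∈ s, Multiset.replicate (f i / i) i, ?_, ?_⟩, ?_, ?_, ?_⟩
    · intro i hi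
      simp only [exists_prop, Multiset.mem_sum, mem_map, Function.Embedding.coeFn_mk] at hi
      rcases hi with ⟨t, ht, z⟩
      apply hs
      rwa [Multiset.eq_of_mem_replicate z]
    · simp_rw [Multiset.sum_sum, Multiset.sum_replicate, Nat.nsmul_eq_mul]
      rw [← hf'.1]
      refine sum_congr rfl fun i hi => Nat.div_mul_cancel ?_
      rcases hf₄ i hi with ⟨w, _, hw₂⟩
      rw [← hw₂]
      exact dvd_mul_left _ _
    · intro i
      simp_rw [Multiset.count_sum', Multiset.count_replicate, sum_ite_eq']
      split_ifs with h
      · rcases hf₄ i h with ⟨w, hw₁, hw₂⟩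
        rwa [← hw₂, Nat.mul_div_cancel _ (hs i h)]
      · exact hc _ h
    · intro i hi
      rw [Multiset.mem_sum] at hi
      rcases hi with ⟨j, hj₁, hj₂⟩
      rwa [Multiset.eq_of_mem_replicate hj₂]
    · ext i
      simp_rw [Multiset.count_sum', Multiset.count_replicate, sum_ite_eq']
      simp only [ne_eq, Multiset.mem_toFinset, not_not, smul_eq_mul, ite_mul,
        zero_mul, Finsupp.coe_mk]
      split_ifs with h
      · apply Nat.div_mul_cancel
        rcases hf₄ i h with ⟨w, _, hw₂⟩
        apply Dvd.intro_left _ hw₂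
      · apply symm
        rw [← Finsupp.notMem_support_iff]
        exact notMem_mono hf'.2 h

/-- partial generating function for all partitions -/
noncomputable def partialP (α : Type*) [Field α] (m : ℕ) : PowerSeries α :=
  ∏ i ∈ range m, (1 - X^(i+1))⁻¹

theorem partialP_prop (α : Type*) [Field α] (N m : ℕ) (hm : N ≤ m) :
    ((Fintype.card (Nat.Partition N) : α)) = coeff N (partialP α m) := by
  rw [partialP]
  have himg : ∀ i : ℕ, ((· * (i+1)) '' Set.univ) = {k | (i+1) ∣ k} := by
    intro i
    ext k
    simp only [Set.image_univ, Set.mem_range, Set.mem_setOf_eq]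
    constructor
    · rintro ⟨a, rfl⟩
      exact Dvd.intro_left a rfl
    · rintro ⟨a, rfl⟩
      exact ⟨a, mul_comm _ _⟩
  have h1 : (∏ i ∈ range m, (1 - (X:PowerSeries α)^(i+1))⁻¹)
      = ∏ i ∈ (range m).map ⟨Nat.succ, Nat.succ_injective⟩,
          indicatorSeries α ((· * i) '' Set.univ) := by
    rw [Finset.prod_map]
    apply prod_congr rfl
    intro i _
    show (1 - (X:PowerSeries α)^(i+1))⁻¹ = indicatorSeries α ((· * (Nat.succ i)) '' Set.univ)
    rw [num_series', show Nat.succ i = i + 1 from rfl, himg i]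
  have key := partialGF_prop α N ((range m).map ⟨Nat.succ, Nat.succ_injective⟩)
    (by
      intro i hi
      simp only [mem_map, Function.Embedding.coeFn_mk] at hi
      obtain ⟨a, -, rfl⟩ := hi
      exact Nat.succ_pos a)
    (fun _ => Set.univ) (fun _ _ => trivial)
  rw [h1]
  rw [← key]
  congr 1
  have hall : ∀ p : N.Partition, (∀ j, p.parts.count j ∈ (Set.univ : Set ℕ)) ∧
      ∀ j ∈ p.parts, j ∈ (range m).map ⟨Nat.succ, Nat.succ_injective⟩ := by
    intro p
    refine ⟨fun _ => trivial, fun j hj => ?_⟩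
    have hjN : j ≤ N := by
      simpa [p.parts_sum] using Multiset.single_le_sum (fun _ _ => Nat.zero_le _) _ hj
    have hjpos : 0 < j := p.parts_pos hj
    simp only [mem_map, mem_range, Function.Embedding.coeFn_mk]
    exact ⟨j - 1, by omega, by omega⟩
  rw [Finset.filter_true_of_mem (fun p _ => hall p), card_univ]

end GF

section Final
open PowerSeries

instance : Fact (Nat.Prime 5) := ⟨by norm_num⟩

noncomputable instance : CharP (PowerSeries (ZMod 5)) 5 := by
  constructor
  intro x
  constructor
  · intro h
    have := congrArg (constantCoeff (R := ZMod 5)) h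
    simp only [map_natCast, map_zero] at this
    exact (CharP.cast_eq_zero_iff (ZMod 5) 5 x).mp this
  · intro h
    obtain ⟨c, rfl⟩ := h
    rw [Nat.cast_mul]
    have h5 : ((5:ℕ) : PowerSeries (ZMod 5)) = 0 := by
      rw [← map_natCast (C (R := ZMod 5)) 5]
      have h : ((5:ℕ) : ZMod 5) = 0 := by decide
      rw [h, map_zero]
    rw [h5, zero_mul]

lemma PP_pow_five (m : ℕ) : (PP 1 m : PowerSeries (ZMod 5))^5 = PP 5 m := by
  rw [PP, PP, ← prod_pow]
  apply prod_congr rfl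
  intro i _
  rw [sub_pow_char (1 : PowerSeries (ZMod 5)) (X^(1*(i+1))), one_pow, ← pow_mul, one_mul]
  rw [show (i+1)*5 = 5*(i+1) by ring]

/-- the auxiliary factor `∏ (1 - X^(5(i+1)))⁻¹` -/
noncomputable def G5 (m : ℕ) : PowerSeries (ZMod 5) := ∏ i ∈ range m, (1 - X^(5*(i+1)))⁻¹

lemma PP5_G5 (m : ℕ) : (PP 5 m : PowerSeries (ZMod 5)) * G5 m = 1 := by
  rw [PP, G5, ← prod_mul_distrib]
  apply Finset.prod_eq_one
  intro i _
  apply PowerSeries.mul_inv_cancel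
  rw [map_sub, map_one, map_pow, constantCoeff_X, zero_pow (by positivity), sub_zero]
  exact one_ne_zero

lemma G5_support (m : ℕ) (b : ℕ) (hb : ¬ (5 ∣ b)) : coeff b (G5 m) = 0 := by
  rw [G5]
  -- every factor is supported on multiples of 5
  suffices H : ∀ (s : Finset ℕ), (∀ b', ¬ (5 ∣ b') →
      coeff b' (∏ i ∈ s, (1 - (X:PowerSeries (ZMod 5))^(5*(i+1)))⁻¹) = 0) by
    exact H (range m) b hb
  intro s
  classical
  induction s using Finset.induction with
  | empty =>
      intro b' hb'
      simp only [Finset.prod_empty, coeff_one]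
      rw [if_neg]
      intro h
      exact hb' (h ▸ ⟨0, rfl⟩)
  | @insert x s' hx ih =>
      intro b' hb'
      rw [Finset.prod_insert hx, coeff_mul]
      apply Finset.sum_eq_zero
      rintro ⟨u, v⟩ huv
      rw [Finset.HasAntidiagonal.mem_antidiagonal] at huv
      by_cases h5u : 5 ∣ u
      · have h5v : ¬ (5 ∣ v) := by
          intro hv
          exact hb' (by omega)
        rw [ih v h5v, mul_zero]
      · have hfac : (1 - (X:PowerSeries (ZMod 5))^(5*(x+1)))⁻¹
            = indicatorSeries (ZMod 5) {k | (5*x+4) + 1 ∣ k} := by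
          rw [show 5*(x+1) = (5*x+4)+1 by ring]
          exact num_series' (5*x+4)
        rw [hfac, coeff_indicator_neg, zero_mul]
        intro hmem
        apply h5u
        have hdvd : (5*x+4)+1 ∣ u := hmem
        obtain ⟨c, rfl⟩ := hdvd
        exact ⟨(x+1)*c, by ring⟩
  
lemma partialP_eq (m : ℕ) :
    partialP (ZMod 5) m = (PP 1 m)^4 * G5 m := by
  have hP1 : (PP 1 m : PowerSeries (ZMod 5)) * partialP (ZMod 5) m = 1 := by
    rw [PP, partialP, ← prod_mul_distrib]
    apply Finset.prod_eq_one
    intro i _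
    rw [one_mul (i+1)]
    apply PowerSeries.mul_inv_cancel
    rw [map_sub, map_one, map_pow, constantCoeff_X, zero_pow (by positivity), sub_zero]
    exact one_ne_zero
  have hP2 : (PP 1 m : PowerSeries (ZMod 5)) * ((PP 1 m)^4 * G5 m) = 1 := by
    rw [show (PP 1 m : PowerSeries (ZMod 5)) * ((PP 1 m)^4 * G5 m)
        = (PP 1 m)^5 * G5 m by ring, PP_pow_five, PP5_G5]
  have hne : (PP 1 m : PowerSeries (ZMod 5)) ≠ 0 := by
    intro h
    have hc := PP_const (F := ZMod 5) 1 m one_pos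
    rw [h, map_zero] at hc
    exact one_ne_zero hc.symm
  exact mul_left_cancel₀ hne (hP1.trans hP2.symm)

lemma zmod5_square (u w : ZMod 5) (h : 3*u^2 + w^2 = 0) : u = 0 := by
  revert h
  revert u w
  decide

lemma key_arith (s t l : ℕ) (j : ℤ) (h4 : (s + t) % 5 = 4)
    (hsl : 8*s+1 = (2*l+1)^2) (htj : 24*(t:ℤ)+1 = (6*j-1)^2) :
    ((2*l+1 : ℕ) : ZMod 5) = 0 := by
  apply zmod5_square _ (((6*j-1 : ℤ) : ZMod 5))
  obtain ⟨q, hq⟩ : ∃ q, s + t = 5*q+4 := ⟨(s+t)/5, by omega⟩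
  have hslZ : 8*(s:ℤ)+1 = (2*(l:ℤ)+1)^2 := by exact_mod_cast hsl
  have hqZ : (s:ℤ) + t = 5*q+4 := by exact_mod_cast hq
  have hZ : 3*((2*(l:ℤ)+1))^2 + (6*j-1)^2 = 5 * (24*q + 20) := by
    linear_combination (-3) * hslZ - htj + 24 * hqZ
  calc 3*((2*l+1 : ℕ) : ZMod 5)^2 + (((6*j-1 : ℤ)) : ZMod 5)^2
      = ((3*((2*(l:ℤ)+1))^2 + (6*j-1)^2 : ℤ) : ZMod 5) := by push_cast; ring
    _ = ((5 * (24*q + 20) : ℤ) : ZMod 5) := by rw [hZ]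
    _ = 0 := by
        push_cast
        rw [show (5 : ZMod 5) = 0 by decide, zero_mul]

lemma coeff_P4_eq_zero (N m : ℕ) (hm : N ≤ m) (a : ℕ) (ha : a ≤ N) (ha5 : a % 5 = 4) :
    coeff a ((PP 1 m : PowerSeries (ZMod 5))^4) = 0 := by
  have hJ := jacobi_cong (F := ZMod 5) (N+1) m (by omega)
  rw [show (PP 1 m : PowerSeries (ZMod 5))^4 = (PP 1 m)^3 * PP 1 m by ring, coeff_mul]
  apply Finset.sum_eq_zero
  rintro ⟨s, t⟩ hst
  rw [Finset.HasAntidiagonal.mem_antidiagonal] at hst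
  by_cases hPt : coeff t (PP 1 m : PowerSeries (ZMod 5)) = 0
  · rw [hPt, mul_zero]
  · obtain ⟨j, hj⟩ := pent_support (N+1) m (by omega) t (by omega) hPt
    have hcoeffs : coeff s ((PP 1 m)^3) = coeff s (Jsum (N+1)) :=
      MD_coeff hJ (by omega)
    rw [hcoeffs, Jsum, map_sum, Finset.sum_eq_zero, zero_mul]
    intro l _
    rw [coeff_C_mul, coeff_X_pow]
    by_cases hsl : s = tri l
    · rw [if_pos hsl, mul_one]
      have h8 : 8*s+1 = (2*l+1)^2 := by
        have h := tri_two_mul l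
        have h2 : (2*l+1)^2 = 4*(2*tri l)+1 := by rw [h]; ring
        omega
      have hz := key_arith s t l j (by omega) h8 hj
      exact mul_eq_zero_of_right _ hz
    · rw [if_neg hsl, mul_zero]

end Final

end RamanujanAux

open Finset PowerSeries RamanujanAux

/-- Ramanujan's congruence: `p(5n+4) ≡ 0 (mod 5)` where `p` counts partitions. -/
theorem ramanujan_mod_five (n : ℕ) :
    5 ∣ Fintype.card (Nat.Partition (5 * n + 4)) := by
  have hcast : ((Fintype.card (Nat.Partition (5*n+4)) : ZMod 5))
      = coeff (5*n+4) (partialP (ZMod 5) (5*n+4)) :=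
    partialP_prop (ZMod 5) (5*n+4) (5*n+4) le_rfl
  rw [partialP_eq, coeff_mul] at hcast
  have hzero : ∀ p ∈ antidiagonal (5*n+4),
      coeff p.1 ((PP 1 (5*n+4))^4) * coeff p.2 (G5 (5*n+4)) = 0 := by
    rintro ⟨a, b⟩ hab
    rw [Finset.HasAntidiagonal.mem_antidiagonal] at hab
    by_cases h5 : 5 ∣ b
    · rw [coeff_P4_eq_zero (5*n+4) (5*n+4) le_rfl a (by omega) (by omega), zero_mul]
    · rw [G5_support (5*n+4) b h5, mul_zero]
  rw [Finset.sum_eq_zero hzero] at hcast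
  exact (ZMod.natCast_eq_zero_iff _ 5).mp hcast
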